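/- Let G = (V,E) be a finite undirected graph, let G' = (V',E') be the ESC reduction graph of G, and let l be a natural number. Then G has a vertex cover of size at most l if and only if there exists an edge set C ⊆ E' with |C| ≤ l such that the directed graph (V', E' \ C) is singly-connected. -/

import Mathlib

/-- A simple (directed) path from `v` to `w` in the directed graph with edge relation `E`:
a nonempty list of pairwise distinct vertices starting at `v`, ending at `w`,
with consecutive vertices joined by edges. -/
def IsSimplePath {V : Type*} (E : V → V → Prop) (v w : V) (p : List V) : Prop :=
  p.Chain' E ∧ p.head? = some v ∧ p.getLast? = some w ∧ p.Nodup

/-- A directed graph is singly-connected if for every pair of vertices there is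
at most one simple path between them. -/
def SinglyConnected {V : Type*} (E : V → V → Prop) : Prop :=
  ∀ v w : V, ∀ p q : List V, IsSimplePath E v w p → IsSimplePath E v w q → p = q

/-- The vertex set of the ESC reduction graph of an undirected graph `G`: two vertices
`v'`, `v''` for every vertex `v` of `G` and two vertices `e'`, `e''` for every edge `e`
of `G`. -/
def ESCVert {V : Type*} (G : SimpleGraph V) : Type _ :=
  (V ⊕ V) ⊕ (G.edgeSet ⊕ G.edgeSet)

/-- The vertex `v'` of the ESC reduction graph. -/
def ESCVert.vA {V : Type*} (G : SimpleGraph V) (v : V) : ESCVert G :=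
  Sum.inl (Sum.inl v)

/-- The vertex `v''` of the ESC reduction graph. -/
def ESCVert.vB {V : Type*} (G : SimpleGraph V) (v : V) : ESCVert G :=
  Sum.inl (Sum.inr v)

/-- The vertex `e'` of the ESC reduction graph. -/
def ESCVert.eA {V : Type*} (G : SimpleGraph V) (e : G.edgeSet) : ESCVert G :=
  Sum.inr (Sum.inl e)

/-- The vertex `e''` of the ESC reduction graph. -/
def ESCVert.eB {V : Type*} (G : SimpleGraph V) (e : G.edgeSet) : ESCVert G :=
  Sum.inr (Sum.inr e)

/-- The edge set of the ESC reduction graph of `G`: an edge `(v', v'')` for every vertex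
`v` of `G`, and edges `(e', u')`, `(e', w')`, `(u'', e'')`, `(w'', e'')` for every
undirected edge `e = {u, w}` of `G` (i.e. edges `(e', v')` and `(v'', e'')` for every
endpoint `v` of `e`). -/
def ESCEdges {V : Type*} (G : SimpleGraph V) : Set (ESCVert G × ESCVert G) :=
  {p | (∃ v : V, p = (ESCVert.vA G v, ESCVert.vB G v)) ∨
       (∃ (e : G.edgeSet) (v : V), v ∈ (e : Sym2 V) ∧ p = (ESCVert.eA G e, ESCVert.vA G v)) ∨
       (∃ (e : G.edgeSet) (v : V), v ∈ (e : Sym2 V) ∧ p = (ESCVert.vB G v, ESCVert.eB G e))}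

/-- A vertex cover of the undirected graph `G`: a set of vertices meeting every edge. -/
def IsVertexCover {V : Type*} (G : SimpleGraph V) (U : Set V) : Prop :=
  ∀ e ∈ G.edgeSet, ∃ v ∈ U, v ∈ e

section ESCAux

variable {V : Type*} {G : SimpleGraph V}

open ESCVert

@[simp] lemma vA_eq_vA_iff {v u : V} : vA G v = vA G u ↔ v = u :=
  ⟨fun h => Sum.inl.inj (Sum.inl.inj h), fun h => h ▸ rfl⟩

@[simp] lemma vB_eq_vB_iff {v u : V} : vB G v = vB G u ↔ v = u :=
  ⟨fun h => Sum.inr.inj (Sum.inl.inj h), fun h => h ▸ rfl⟩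

@[simp] lemma eA_eq_eA_iff {e f : G.edgeSet} : eA G e = eA G f ↔ e = f :=
  ⟨fun h => Sum.inl.inj (Sum.inr.inj h), fun h => h ▸ rfl⟩

@[simp] lemma eB_eq_eB_iff {e f : G.edgeSet} : eB G e = eB G f ↔ e = f :=
  ⟨fun h => Sum.inr.inj (Sum.inr.inj h), fun h => h ▸ rfl⟩

@[simp] lemma vA_ne_vB {v u : V} : vA G v ≠ vB G u :=
  fun h => Sum.inl_ne_inr (Sum.inl.inj h)

@[simp] lemma vB_ne_vA {v u : V} : vB G v ≠ vA G u :=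
  fun h => Sum.inr_ne_inl (Sum.inl.inj h)

@[simp] lemma vA_ne_eA {v : V} {e : G.edgeSet} : vA G v ≠ eA G e :=
  fun h => Sum.inl_ne_inr h

@[simp] lemma eA_ne_vA {v : V} {e : G.edgeSet} : eA G e ≠ vA G v :=
  fun h => Sum.inr_ne_inl h

@[simp] lemma vA_ne_eB {v : V} {e : G.edgeSet} : vA G v ≠ eB G e :=
  fun h => Sum.inl_ne_inr h

@[simp] lemma eB_ne_vA {v : V} {e : G.edgeSet} : eB G e ≠ vA G v :=
  fun h => Sum.inr_ne_inl h

@[simp] lemma vB_ne_eA {v : V} {e : G.edgeSet} : vB G v ≠ eA G e :=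
  fun h => Sum.inl_ne_inr h

@[simp] lemma eA_ne_vB {v : V} {e : G.edgeSet} : eA G e ≠ vB G v :=
  fun h => Sum.inr_ne_inl h

@[simp] lemma vB_ne_eB {v : V} {e : G.edgeSet} : vB G v ≠ eB G e :=
  fun h => Sum.inl_ne_inr h

@[simp] lemma eB_ne_vB {v : V} {e : G.edgeSet} : eB G e ≠ vB G v :=
  fun h => Sum.inr_ne_inl h

@[simp] lemma eA_ne_eB {e f : G.edgeSet} : eA G e ≠ eB G f :=
  fun h => Sum.inl_ne_inr (Sum.inr.inj h)

@[simp] lemma eB_ne_eA {e f : G.edgeSet} : eB G e ≠ eA G f :=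
  fun h => Sum.inr_ne_inl (Sum.inr.inj h)

lemma esc_edge_cases {a b : ESCVert G} (h : (a, b) ∈ ESCEdges G) :
    (∃ v : V, a = vA G v ∧ b = vB G v) ∨
    (∃ (e : G.edgeSet) (v : V), v ∈ (e : Sym2 V) ∧ a = eA G e ∧ b = vA G v) ∨
    (∃ (e : G.edgeSet) (v : V), v ∈ (e : Sym2 V) ∧ a = vB G v ∧ b = eB G e) := by
  rcases h with ⟨v, hv⟩ | ⟨e, v, hv, hp⟩ | ⟨e, v, hv, hp⟩
  · exact Or.inl ⟨v, by simpa [Prod.ext_iff] using hv⟩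
  · exact Or.inr (Or.inl ⟨e, v, hv, by simpa [Prod.ext_iff] using hp⟩)
  · exact Or.inr (Or.inr ⟨e, v, hv, by simpa [Prod.ext_iff] using hp⟩)

lemma esc_mem_of_eA_vA {e : G.edgeSet} {u : V}
    (h : (eA G e, vA G u) ∈ ESCEdges G) : u ∈ (e : Sym2 V) := by
  rcases esc_edge_cases h with ⟨v, h1, h2⟩ | ⟨e', v, hv, h1, h2⟩ | ⟨e', v, hv, h1, h2⟩ <;>
    simp_all

lemma esc_mem_of_vB_eB {e : G.edgeSet} {u : V}
    (h : (vB G u, eB G e) ∈ ESCEdges G) : u ∈ (e : Sym2 V) := by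
  rcases esc_edge_cases h with ⟨v, h1, h2⟩ | ⟨e', v, hv, h1, h2⟩ | ⟨e', v, hv, h1, h2⟩ <;>
    simp_all

lemma esc_chain_shape (R : ESCVert G → ESCVert G → Prop)
    (hR : ∀ a b, R a b → (a, b) ∈ ESCEdges G) :
    ∀ p : List (ESCVert G), p.Chain' R → p ≠ [] →
      (∃ x, p = [x]) ∨
      (∃ (e : G.edgeSet) (u : V), u ∈ (e : Sym2 V) ∧ p = [eA G e, vA G u]) ∨
      (∃ u : V, p = [vA G u, vB G u]) ∨
      (∃ (e : G.edgeSet) (u : V), u ∈ (e : Sym2 V) ∧ p = [vB G u, eB G e]) ∨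
      (∃ (e : G.edgeSet) (u : V), u ∈ (e : Sym2 V) ∧ p = [eA G e, vA G u, vB G u]) ∨
      (∃ (e : G.edgeSet) (u : V), u ∈ (e : Sym2 V) ∧ p = [vA G u, vB G u, eB G e]) ∨
      (∃ (e f : G.edgeSet) (u : V), u ∈ (e : Sym2 V) ∧ u ∈ (f : Sym2 V) ∧
        p = [eA G e, vA G u, vB G u, eB G f]) := by
  rintro (_ | ⟨a, _ | ⟨b, t⟩⟩) hp hne
  · exact absurd rfl hne
  · exact Or.inl ⟨a, rfl⟩
  · obtain ⟨h1, hp1⟩ := List.isChain_cons_cons.mp hp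
    rcases esc_edge_cases (hR _ _ h1) with ⟨u, rfl, rfl⟩ | ⟨e, u, hu, rfl, rfl⟩ |
        ⟨e, u, hu, rfl, rfl⟩
    · -- a = vA u, b = vB u
      rcases t with _ | ⟨c, t⟩
      · exact Or.inr (Or.inr (Or.inl ⟨u, rfl⟩))
      · obtain ⟨h2, hp2⟩ := List.isChain_cons_cons.mp hp1
        rcases esc_edge_cases (hR _ _ h2) with ⟨w, h, rfl⟩ | ⟨e, w, hw, h, rfl⟩ |
            ⟨e, w, hw, h, rfl⟩
        · exact absurd h (by simp)
        · exact absurd h (by simp)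
        · have huw : u = w := by simpa using h
          subst huw
          rcases t with _ | ⟨d, t⟩
          · exact Or.inr (Or.inr (Or.inr (Or.inr (Or.inr (Or.inl ⟨e, u, hw, rfl⟩)))))
          · obtain ⟨h3, hp3⟩ := List.isChain_cons_cons.mp hp2
            rcases esc_edge_cases (hR _ _ h3) with ⟨w, h, rfl⟩ | ⟨e2, w, hw2, h, rfl⟩ |
                ⟨e2, w, hw2, h, rfl⟩ <;> simp at h
    · -- a = eA e, b = vA u
      rcases t with _ | ⟨c, t⟩
      · exact Or.inr (Or.inl ⟨e, u, hu, rfl⟩)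
      · obtain ⟨h2, hp2⟩ := List.isChain_cons_cons.mp hp1
        rcases esc_edge_cases (hR _ _ h2) with ⟨w, h, rfl⟩ | ⟨e2, w, hw, h, rfl⟩ |
            ⟨e2, w, hw, h, rfl⟩
        · have huw : u = w := by simpa using h
          subst huw
          rcases t with _ | ⟨d, t⟩
          · exact Or.inr (Or.inr (Or.inr (Or.inr (Or.inl ⟨e, u, hu, rfl⟩))))
          · obtain ⟨h3, hp3⟩ := List.isChain_cons_cons.mp hp2
            rcases esc_edge_cases (hR _ _ h3) with ⟨w, h, rfl⟩ | ⟨e2, w, hw2, h, rfl⟩ |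
                ⟨e2, w, hw2, h, rfl⟩
            · exact absurd h (by simp)
            · exact absurd h (by simp)
            · have huw : u = w := by simpa using h
              subst huw
              rcases t with _ | ⟨x, t⟩
              · exact Or.inr (Or.inr (Or.inr (Or.inr (Or.inr (Or.inr
                  ⟨e, e2, u, hu, hw2, rfl⟩)))))
              · obtain ⟨h4, hp4⟩ := List.isChain_cons_cons.mp hp3
                rcases esc_edge_cases (hR _ _ h4) with ⟨w, h, rfl⟩ | ⟨e3, w, hw3, h, rfl⟩ |
                    ⟨e3, w, hw3, h, rfl⟩ <;> simp at h
        · exact absurd h (by simp)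
        · exact absurd h (by simp)
    · -- a = vB u, b = eB e
      rcases t with _ | ⟨c, t⟩
      · exact Or.inr (Or.inr (Or.inr (Or.inl ⟨e, u, hu, rfl⟩)))
      · obtain ⟨h2, hp2⟩ := List.isChain_cons_cons.mp hp1
        rcases esc_edge_cases (hR _ _ h2) with ⟨w, h, rfl⟩ | ⟨e2, w, hw, h, rfl⟩ |
            ⟨e2, w, hw, h, rfl⟩ <;> simp at h

lemma esc_singlyConnected_of_uniq (R : ESCVert G → ESCVert G → Prop)
    (hR : ∀ a b, R a b → (a, b) ∈ ESCEdges G)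
    (huniq : ∀ (e f : G.edgeSet) (u₁ u₂ : V),
      R (eA G e) (vA G u₁) → R (vA G u₁) (vB G u₁) → R (vB G u₁) (eB G f) →
      R (eA G e) (vA G u₂) → R (vA G u₂) (vB G u₂) → R (vB G u₂) (eB G f) →
      u₁ = u₂) :
    SinglyConnected R := by
  intro v w p q hp hq
  obtain ⟨hpc, hph, hpl, -⟩ := hp
  obtain ⟨hqc, hqh, hql, -⟩ := hq
  have hpne : p ≠ [] := by rintro rfl; simp at hph
  have hqne : q ≠ [] := by rintro rfl; simp at hqh
  rcases esc_chain_shape R hR p hpc hpne with ⟨x, rfl⟩ | ⟨e, u, hu, rfl⟩ | ⟨u, rfl⟩ |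
      ⟨e, u, hu, rfl⟩ | ⟨e, u, hu, rfl⟩ | ⟨e, u, hu, rfl⟩ | ⟨e, f, u, hue, huf, rfl⟩ <;>
    rcases esc_chain_shape R hR q hqc hqne with ⟨y, rfl⟩ | ⟨e2, u2, hu2, rfl⟩ | ⟨u2, rfl⟩ |
      ⟨e2, u2, hu2, rfl⟩ | ⟨e2, u2, hu2, rfl⟩ | ⟨e2, u2, hu2, rfl⟩ |
      ⟨e2, f2, u2, hue2, huf2, rfl⟩ <;>
    simp only [List.head?_cons, List.getLast?_singleton, List.getLast?_cons_cons,
      Option.some.injEq] at hph hpl hqh hql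
  all_goals subst hph
  all_goals subst hpl
  all_goals (try subst hqh)
  all_goals (try subst hql)
  all_goals (try rfl)
  all_goals (try simp only [vA_eq_vA_iff, vB_eq_vB_iff, eA_eq_eA_iff, eB_eq_eB_iff,
    vA_ne_vB, vB_ne_vA, vA_ne_eA, eA_ne_vA, vA_ne_eB, eB_ne_vA, vB_ne_eA, eA_ne_vB,
    vB_ne_eB, eB_ne_vB, eA_ne_eB, eB_ne_eA] at hqh)
  all_goals (try simp only [vA_eq_vA_iff, vB_eq_vB_iff, eA_eq_eA_iff, eB_eq_eB_iff,
    vA_ne_vB, vB_ne_vA, vA_ne_eA, eA_ne_vA, vA_ne_eB, eB_ne_vA, vB_ne_eA, eA_ne_vB,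
    vB_ne_eB, eB_ne_vB, eA_ne_eB, eB_ne_eA] at hql)
  all_goals (try subst hqh)
  all_goals (try subst hql)
  all_goals (try rfl)
  simp only [List.Chain', List.isChain_cons_cons, List.isChain_singleton, and_true] at hpc hqc
  obtain rfl := huniq e2 f2 u u2 hpc.1 hpc.2.1 hpc.2.2 hqc.1 hqc.2.1 hqc.2.2
  rfl

def escLabel : ((V ⊕ V) ⊕ (G.edgeSet ⊕ G.edgeSet)) × ((V ⊕ V) ⊕ (G.edgeSet ⊕ G.edgeSet)) →
    Option V
  | (Sum.inl (Sum.inl v), _) => some v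
  | (Sum.inl (Sum.inr v), _) => some v
  | (_, Sum.inl (Sum.inl v)) => some v
  | (_, Sum.inl (Sum.inr v)) => some v
  | _ => none

lemma escLabel_vAvB (v u : V) : escLabel (G := G) (vA G v, vB G u) = some v := rfl

lemma escLabel_eAvA (e : G.edgeSet) (u : V) : escLabel (G := G) (eA G e, vA G u) = some u := rfl

lemma escLabel_vBeB (u : V) (e : G.edgeSet) : escLabel (G := G) (vB G u, eB G e) = some u := rfl

instance [Finite V] : Finite (ESCVert G) := by unfold ESCVert; infer_instance

end ESCAux

/-- a finite undirected graph `G` has a vertex cover of size at most `l`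
iff there is a set `C` of at most `l` edges of the ESC reduction graph `G'` of `G` whose
removal from `G'` leaves a singly-connected directed graph. -/
theorem vertexCover_iff_esc {V : Type*} [Finite V] (G : SimpleGraph V) (l : ℕ) :
    (∃ U : Set V, IsVertexCover G U ∧ U.ncard ≤ l) ↔
      (∃ C : Set (ESCVert G × ESCVert G), C ⊆ ESCEdges G ∧ C.ncard ≤ l ∧
        SinglyConnected (fun a b : ESCVert G => (a, b) ∈ ESCEdges G \ C)) := by
  classical
  constructor
  · rintro ⟨U, hcov, hcard⟩
    refine ⟨(fun v => (ESCVert.vA G v, ESCVert.vB G v)) '' U, ?_, ?_, ?_⟩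
    · rintro p ⟨v, hv, rfl⟩
      exact Or.inl ⟨v, rfl⟩
    · exact le_trans (Set.ncard_image_le U.toFinite) hcard
    · apply esc_singlyConnected_of_uniq
      · exact fun a b h => h.1
      · intro e f u1 u2 h1 h2 h3 h1' h2' h3'
        by_contra hne
        have hu1U : u1 ∉ U := fun hmem => h2.2 ⟨u1, hmem, rfl⟩
        have hu2U : u2 ∉ U := fun hmem => h2'.2 ⟨u2, hmem, rfl⟩
        have hu1e : u1 ∈ (e : Sym2 V) := esc_mem_of_eA_vA h1.1
        have hu2e : u2 ∈ (e : Sym2 V) := esc_mem_of_eA_vA h1'.1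
        have he : (e : Sym2 V) = s(u1, u2) := (Sym2.mem_and_mem_iff hne).mp ⟨hu1e, hu2e⟩
        obtain ⟨x, hxU, hxe⟩ := hcov e e.2
        rw [he] at hxe
        rcases Sym2.mem_iff.mp hxe with rfl | rfl
        · exact hu1U hxU
        · exact hu2U hxU
  · rintro ⟨C, hCsub, hCcard, hsc⟩
    refine ⟨{v : V | some v ∈ escLabel (G := G) '' C}, ?_, ?_⟩
    · intro s hs
      induction s using Sym2.ind with
      | _ x y =>
        by_contra hcon
        push_neg at hcon
        have hxU : x ∉ {v : V | some v ∈ escLabel (G := G) '' C} :=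
          fun h => hcon x h (by simp)
        have hyU : y ∉ {v : V | some v ∈ escLabel (G := G) '' C} :=
          fun h => hcon y h (by simp)
        have hxy : x ≠ y := ((SimpleGraph.mem_edgeSet G).mp hs).ne
        set e : G.edgeSet := ⟨s(x,y), hs⟩ with hedef
        have hxe : x ∈ (e : Sym2 V) := by simp [hedef]
        have hye : y ∈ (e : Sym2 V) := by simp [hedef]
        have key : ∀ u : V, u ∉ {v : V | some v ∈ escLabel (G := G) '' C} →
            u ∈ (e : Sym2 V) →
            IsSimplePath (fun a b : ESCVert G => (a, b) ∈ ESCEdges G \ C)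
              (ESCVert.eA G e) (ESCVert.eB G e)
              [ESCVert.eA G e, ESCVert.vA G u, ESCVert.vB G u, ESCVert.eB G e] := by
          intro u hu hue
          have h1 : (ESCVert.eA G e, ESCVert.vA G u) ∈ ESCEdges G :=
            Or.inr (Or.inl ⟨e, u, hue, rfl⟩)
          have h2 : (ESCVert.vA G u, ESCVert.vB G u) ∈ ESCEdges G := Or.inl ⟨u, rfl⟩
          have h3 : (ESCVert.vB G u, ESCVert.eB G e) ∈ ESCEdges G :=
            Or.inr (Or.inr ⟨e, u, hue, rfl⟩)
          have n1 : (ESCVert.eA G e, ESCVert.vA G u) ∉ C :=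
            fun hC => hu ⟨_, hC, escLabel_eAvA e u⟩
          have n2 : (ESCVert.vA G u, ESCVert.vB G u) ∉ C :=
            fun hC => hu ⟨_, hC, escLabel_vAvB u u⟩
          have n3 : (ESCVert.vB G u, ESCVert.eB G e) ∉ C :=
            fun hC => hu ⟨_, hC, escLabel_vBeB u e⟩
          refine ⟨?_, rfl, rfl, ?_⟩
          · exact List.isChain_cons_cons.mpr ⟨⟨h1, n1⟩, List.isChain_cons_cons.mpr ⟨⟨h2, n2⟩,
              List.isChain_cons_cons.mpr ⟨⟨h3, n3⟩, List.isChain_singleton _⟩⟩⟩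
          · simp
        have heq := hsc _ _ _ _ (key x hxU hxe) (key y hyU hye)
        simp only [List.cons.injEq, vA_eq_vA_iff, vB_eq_vB_iff, and_true, true_and,
          and_self] at heq
        exact hxy heq
    · have h1 : {v : V | some v ∈ escLabel (G := G) '' C}.ncard ≤
          (escLabel (G := G) '' C).ncard := by
        refine Set.ncard_le_ncard_of_injOn (fun v => some v) (fun v hv => hv) ?_
          (Set.toFinite _)
        exact fun a _ b _ h => Option.some.inj h
      have h2 : (escLabel (G := G) '' C).ncard ≤ C.ncard := Set.ncard_image_le (Set.toFinite C)
      exact le_trans h1 (le_trans h2 hCcard)
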